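/- There exist constants C, K > 0 and a complex open neighborhood G of [0,1], all depending only on b, c, f, such that b, c, f extend holomorphically to G with c nonvanishing on G, each u_{i,j} extends holomorphically to G, and for every δ > 0, every i, j ≥ 0, and every z ∈ G_δ := {z ∈ G : dist(z, ∂G) > δ}, the extension satisfies |u_{i,j}(z)| ≤ C δ^{−i} K^{i} i^{i} (with the convention 0⁰ := 1). -/

import Mathlib

noncomputable def uS (b c f : ℝ → ℝ) : ℕ → ℕ → ℝ → ℝ
  | 0, 0 => fun x => f x / c x
  | (i+1), 0 => fun x => -(b x / c x) * deriv (uS b c f i 0) x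
  | 0, (_+1) => fun _ => 0
  | 1, (_+1) => fun _ => 0
  | (i+2), (j+1) => fun x =>
      (1 / c x) * (deriv (deriv (uS b c f i j)) x - b x * deriv (uS b c f (i+1) (j+1)) x)
  termination_by i j => (i, j)

open Metric Set Complex
open scoped ENNReal NNReal

lemma lemA (g : ℝ → ℝ) (x : ℝ) (hg : AnalyticAt ℝ g x) :
    ∃ ρ : ℝ, 0 < ρ ∧ ∃ h : ℂ → ℂ, AnalyticOnNhd ℂ h (Metric.ball (x:ℂ) ρ) ∧
      ∀ y : ℝ, dist y x < ρ → h ↑y = ↑(g y) := by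
  obtain ⟨p, r, hp⟩ := hg
  -- pick a positive nnreal ρ with ρ < r and ρ < p.radius
  obtain ⟨ρ, hρ0, hρr⟩ : ∃ ρ : NNReal, 0 < ρ ∧ (ρ : ℝ≥0∞) < r := by
    rcases ENNReal.lt_iff_exists_nnreal_btwn.1 hp.r_pos with ⟨ρ, h1, h2⟩
    exact ⟨ρ, by exact_mod_cast h1, h2⟩
  have hρrad : (ρ : ℝ≥0∞) < p.radius := lt_of_lt_of_le hρr hp.r_le
  obtain ⟨Cb, hCb0, hCb⟩ := p.norm_mul_pow_le_of_lt_radius hρrad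
  set q : FormalMultilinearSeries ℂ ℂ ℂ :=
    FormalMultilinearSeries.ofScalars ℂ (fun n => ((p.coeff n : ℝ) : ℂ)) with hq
  have hqn : ∀ n, ‖q n‖ = ‖p n‖ := by
    intro n
    rw [hq, FormalMultilinearSeries.ofScalars_norm, FormalMultilinearSeries.norm_apply_eq_norm_coef]
    simp
  have hqrad : (ρ : ℝ≥0∞) ≤ q.radius := by
    apply q.le_radius_of_bound Cb
    intro n
    rw [hqn]
    exact hCb n
  have hq0 : 0 < q.radius := lt_of_lt_of_le (by exact_mod_cast hρ0) hqrad
  have hqball : HasFPowerSeriesOnBall q.sum q 0 q.radius :=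
    q.hasFPowerSeriesOnBall hq0
  refine ⟨ρ, by exact_mod_cast hρ0, fun z => q.sum (z - ↑x), ?_, ?_⟩
  · intro z hz
    have hmem : z - ↑x ∈ Metric.eball (0:ℂ) q.radius := by
      rw [Metric.mem_eball, edist_zero_right]
      refine lt_of_lt_of_le ?_ hqrad
      have : ‖z - ↑x‖₊ < ρ := by
        rw [← NNReal.coe_lt_coe]
        simpa [Metric.mem_ball, dist_eq_norm] using hz
      exact_mod_cast this
    have htr : AnalyticAt ℂ (fun w : ℂ => w - (x:ℂ)) z := analyticAt_id.sub analyticAt_const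
    exact AnalyticAt.comp (g := q.sum) (f := fun w : ℂ => w - (x:ℂ)) (x := z) (hqball.analyticAt_of_mem hmem) htr
  · intro y hy
    have hyx : ‖y - x‖ < (ρ:ℝ) := by rwa [← dist_eq_norm]
    have hmemR : (y - x : ℝ) ∈ Metric.eball (0:ℝ) r := by
      rw [Metric.mem_eball, edist_zero_right]
      calc (‖y - x‖₊ : ℝ≥0∞) < ρ := by exact_mod_cast hyx
        _ < r := hρr
    have hmemC : ((y - x : ℝ) : ℂ) ∈ Metric.eball (0:ℂ) q.radius := by
      rw [Metric.mem_eball, edist_zero_right]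
      refine lt_of_lt_of_le ?_ hqrad
      rw [enorm_eq_nnnorm, Complex.nnnorm_real]
      exact_mod_cast hyx
    have h1 : HasSum (fun n => p n fun _ => (y - x : ℝ)) (g y) := by
      have := hp.hasSum hmemR
      simpa using this
    have h2 : HasSum (fun n => q n fun _ => ((y-x:ℝ):ℂ)) (q.sum ((y-x:ℝ):ℂ)) := by
      have := hqball.hasSum hmemC
      simpa using this
    have h1' : HasSum (fun n => ((p n fun _ => (y - x : ℝ)) : ℂ)) ((g y : ℂ)) :=
      Complex.ofRealCLM.hasSum h1
    have hterm : (fun n => ((p n fun _ => (y - x : ℝ)) : ℂ))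
        = fun n => q n fun _ => ((y-x:ℝ):ℂ) := by
      funext n
      rw [FormalMultilinearSeries.apply_eq_pow_smul_coeff, hq,
        FormalMultilinearSeries.ofScalars_apply_eq]
      simp only [smul_eq_mul]
      push_cast
      ring
    rw [hterm] at h1'
    have hcast : ((y:ℂ) - (x:ℂ)) = ((y - x : ℝ):ℂ) := by push_cast; ring
    show q.sum ((y:ℂ) - ↑x) = (g y : ℂ)
    rw [hcast]
    exact h2.unique h1'

-- pairwise agreement of local extensions
lemma lemC {g : ℝ → ℝ} {x x' : ℝ} {ρ ρ' : ℝ} {h h' : ℂ → ℂ}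
    (ha : AnalyticOnNhd ℂ h (Metric.ball (x:ℂ) ρ))
    (ha' : AnalyticOnNhd ℂ h' (Metric.ball (x':ℂ) ρ'))
    (he : ∀ y : ℝ, dist y x < ρ → h ↑y = ↑(g y))
    (he' : ∀ y : ℝ, dist y x' < ρ' → h' ↑y = ↑(g y)) :
    Set.EqOn h h' (Metric.ball (x:ℂ) ρ ∩ Metric.ball (x':ℂ) ρ') := by
  set U := Metric.ball (x:ℂ) ρ ∩ Metric.ball (x':ℂ) ρ' with hU
  rcases Set.eq_empty_or_nonempty U with hUe | ⟨z₀, hz₀⟩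
  · rw [hUe]; exact fun z hz => absurd hz (Set.notMem_empty z)
  have hUo : IsOpen U := Metric.isOpen_ball.inter Metric.isOpen_ball
  have hUc : Convex ℝ U := (convex_ball _ _).inter (convex_ball _ _)
  -- real point in U
  have hreal : ∀ z ∈ U, ((z.re : ℂ)) ∈ U := by
    intro z hz
    constructor
    · have h1 : dist ((z.re:ℂ)) (x:ℂ) ≤ dist z (x:ℂ) := by
        rw [Complex.dist_eq, Complex.dist_eq]
        have : ((z.re:ℂ)) - (x:ℂ) = ((z - x).re : ℂ) := by
          simp [Complex.ext_iff]
        rw [this, Complex.norm_real, Real.norm_eq_abs]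
        exact Complex.abs_re_le_norm _
      exact lt_of_le_of_lt h1 (Metric.mem_ball.1 hz.1)
    · have h1 : dist ((z.re:ℂ)) (x':ℂ) ≤ dist z (x':ℂ) := by
        rw [Complex.dist_eq, Complex.dist_eq]
        have : ((z.re:ℂ)) - (x':ℂ) = ((z - x').re : ℂ) := by
          simp [Complex.ext_iff]
        rw [this, Complex.norm_real, Real.norm_eq_abs]
        exact Complex.abs_re_le_norm _
      exact lt_of_le_of_lt h1 (Metric.mem_ball.1 hz.2)
  set y₀ := z₀.re with hy₀
  have hy₀U : ((y₀:ℝ):ℂ) ∈ U := hreal z₀ hz₀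
  -- frequently equal near ↑y₀
  have hfreq : ∃ᶠ w in nhdsWithin ((y₀:ℝ):ℂ) {((y₀:ℝ):ℂ)}ᶜ, h w = h' w := by
    obtain ⟨σ, hσ0, hσ⟩ := Metric.isOpen_iff.1 hUo _ hy₀U
    rw [Filter.frequently_iff]
    intro V hV
    rw [mem_nhdsWithin] at hV
    obtain ⟨W, hWo, hWy, hWV⟩ := hV
    obtain ⟨τ, hτ0, hτ⟩ := Metric.isOpen_iff.1 hWo _ hWy
    set δ := min σ τ / 2 with hδ
    have hδ0 : 0 < δ := by positivity
    have hδσ : δ < σ := by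
      have := min_le_left σ τ; simp only [hδ]; linarith
    have hδτ : δ < τ := by
      have := min_le_right σ τ; simp only [hδ]; linarith
    set w : ℂ := ((y₀ + δ : ℝ) : ℂ) with hw
    have hdist : dist w ((y₀:ℝ):ℂ) = δ := by
      rw [hw, Complex.dist_eq]
      have : ((y₀ + δ : ℝ):ℂ) - ((y₀:ℝ):ℂ) = ((δ:ℝ):ℂ) := by push_cast; ring
      rw [this, Complex.norm_real, Real.norm_eq_abs, abs_of_pos hδ0]
    have hwU : w ∈ U := hσ (by rw [Metric.mem_ball, hdist]; exact hδσ)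
    have hwW : w ∈ W := hτ (by rw [Metric.mem_ball, hdist]; exact hδτ)
    have hwne : w ≠ ((y₀:ℝ):ℂ) := by
      rw [hw, Ne, Complex.ofReal_inj]
      intro hcon; linarith
    refine ⟨w, hWV ⟨hwW, hwne⟩, ?_⟩
    have h1 : dist (y₀ + δ) x < ρ := by
      have := hwU.1
      rwa [Metric.mem_ball, hw, Complex.isometry_ofReal.dist_eq] at this
    have h2 : dist (y₀ + δ) x' < ρ' := by
      have := hwU.2
      rwa [Metric.mem_ball, hw, Complex.isometry_ofReal.dist_eq] at this
    rw [hw, he _ h1, he' _ h2]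
  exact (ha.mono Set.inter_subset_left).eqOn_of_preconnected_of_frequently_eq
    (ha'.mono Set.inter_subset_right) hUc.isPreconnected hy₀U hfreq

lemma lemB (g : ℝ → ℝ) (hg : AnalyticOnNhd ℝ g (Set.Icc 0 1)) :
    ∃ ε : ℝ, 0 < ε ∧ ∃ h : ℂ → ℂ,
      AnalyticOnNhd ℂ h (Metric.thickening ε (Complex.ofReal '' Set.Icc 0 1)) ∧
      ∀ y : ℝ, (y:ℂ) ∈ Metric.thickening ε (Complex.ofReal '' Set.Icc 0 1) → h ↑y = ↑(g y) := by
  classical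
  set S : Set ℂ := Complex.ofReal '' Set.Icc 0 1 with hS
  have hScompact : IsCompact S := (isCompact_Icc).image Complex.continuous_ofReal
  have H : ∀ x ∈ Set.Icc (0:ℝ) 1, ∃ ρ : ℝ, 0 < ρ ∧ ∃ h : ℂ → ℂ,
      AnalyticOnNhd ℂ h (Metric.ball (x:ℂ) ρ) ∧ ∀ y : ℝ, dist y x < ρ → h ↑y = ↑(g y) :=
    fun x hx => lemA g x (hg x hx)
  choose! ρ hρ0 hfun hfa hfe using H
  -- finite subcover
  have hcover : S ⊆ ⋃ x ∈ Set.Icc (0:ℝ) 1, Metric.ball (x:ℂ) (ρ x / 2) := by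
    rintro z ⟨w, hw, rfl⟩
    exact Set.mem_biUnion hw (by simpa using half_pos (hρ0 w hw))
  obtain ⟨t, hts, htfin, htcov⟩ := hScompact.elim_finite_subcover_image
    (fun x hx => Metric.isOpen_ball) hcover
  have htne : t.Nonempty := by
    rcases htcov ⟨0, ⟨le_refl 0, zero_le_one⟩, rfl⟩ with hmem
    simp only [Set.mem_iUnion] at hmem
    obtain ⟨x, hx, _⟩ := hmem
    exact ⟨x, hx⟩
  have htfne : htfin.toFinset.Nonempty := by
    obtain ⟨x, hx⟩ := htne; exact ⟨x, htfin.mem_toFinset.2 hx⟩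
  set ε : ℝ := htfin.toFinset.inf' htfne (fun x => ρ x / 2) with hε
  have hε0 : 0 < ε := by
    rw [hε, Finset.lt_inf'_iff]
    intro x hx
    exact half_pos (hρ0 x (hts (htfin.mem_toFinset.1 hx)))
  have hεle : ∀ x ∈ t, ε ≤ ρ x / 2 := fun x hx =>
    Finset.inf'_le _ (htfin.mem_toFinset.2 hx)
  -- covering property of the thickening
  have hkey : ∀ z ∈ Metric.thickening ε S, ∃ x, x ∈ t ∧ z ∈ Metric.ball (x:ℂ) (ρ x) := by
    intro z hz
    rw [Metric.mem_thickening_iff] at hz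
    obtain ⟨s, hsS, hds⟩ := hz
    obtain ⟨w, hwI, rfl⟩ := hsS
    have := htcov ⟨w, hwI, rfl⟩
    simp only [Set.mem_iUnion] at this
    obtain ⟨x, hxt, hwx⟩ := this
    refine ⟨x, hxt, ?_⟩
    rw [Metric.mem_ball] at hwx ⊢
    calc dist z (x:ℂ) ≤ dist z ((w:ℝ):ℂ) + dist ((w:ℝ):ℂ) (x:ℂ) := dist_triangle _ _ _
      _ < ε + ρ x / 2 := add_lt_add hds hwx
      _ ≤ ρ x / 2 + ρ x / 2 := by linarith [hεle x hxt]
      _ = ρ x := by ring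
  set Hf : ℂ → ℂ := fun z =>
    if hP : ∃ x, x ∈ t ∧ z ∈ Metric.ball (x:ℂ) (ρ x) then hfun hP.choose z else 0 with hHf
  have hagree : ∀ x ∈ t, ∀ z ∈ Metric.thickening ε S, z ∈ Metric.ball (x:ℂ) (ρ x) →
      Hf z = hfun x z := by
    intro x hxt z hz hzb
    have hP : ∃ x, x ∈ t ∧ z ∈ Metric.ball (x:ℂ) (ρ x) := ⟨x, hxt, hzb⟩
    rw [hHf]
    simp only [dif_pos hP]
    have hx1 : hP.choose ∈ t := hP.choose_spec.1
    have hx2 : z ∈ Metric.ball ((hP.choose:ℝ):ℂ) (ρ hP.choose) := hP.choose_spec.2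
    have hmem1 : hP.choose ∈ Set.Icc (0:ℝ) 1 := hts hx1
    have hmem2 : x ∈ Set.Icc (0:ℝ) 1 := hts hxt
    exact lemC (hfa _ hmem1) (hfa _ hmem2) (hfe _ hmem1) (hfe _ hmem2) ⟨hx2, hzb⟩
  refine ⟨ε, hε0, Hf, ?_, ?_⟩
  · intro z₀ hz₀
    obtain ⟨x₀, hx₀t, hx₀b⟩ := hkey z₀ hz₀
    have hopen : IsOpen (Metric.thickening ε S ∩ Metric.ball ((x₀:ℝ):ℂ) (ρ x₀)) :=
      (Metric.isOpen_thickening).inter Metric.isOpen_ball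
    have hev : Hf =ᶠ[nhds z₀] hfun x₀ := by
      apply Filter.eventuallyEq_of_mem (hopen.mem_nhds ⟨hz₀, hx₀b⟩)
      intro z hz
      exact hagree x₀ hx₀t z hz.1 hz.2
    exact ((hfa _ (hts hx₀t)) z₀ hx₀b).congr hev.symm
  · intro y hy
    obtain ⟨x₁, hx₁t, hx₁b⟩ := hkey _ hy
    rw [hagree x₁ hx₁t _ hy hx₁b]
    apply hfe _ (hts hx₁t)
    rw [← Complex.isometry_ofReal.dist_eq]
    exact Metric.mem_ball.1 hx₁b

noncomputable def uC (B Cc F : ℂ → ℂ) : ℕ → ℕ → ℂ → ℂ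
  | 0, 0 => fun z => F z / Cc z
  | (i+1), 0 => fun z => -(B z / Cc z) * deriv (uC B Cc F i 0) z
  | 0, (_+1) => fun _ => 0
  | 1, (_+1) => fun _ => 0
  | (i+2), (j+1) => fun z =>
      (1 / Cc z) * (deriv (deriv (uC B Cc F i j)) z - B z * deriv (uC B Cc F (i+1) (j+1)) z)
  termination_by i j => (i, j)

lemma derivDiffOn {h : ℂ → ℂ} {Ω : Set ℂ} (hΩ : IsOpen Ω) (hd : DifferentiableOn ℂ h Ω) :
    DifferentiableOn ℂ (deriv h) Ω :=
  ((hd.analyticOnNhd hΩ).deriv).differentiableOn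

lemma uC_diff {B Cc F : ℂ → ℂ} {Ω : Set ℂ} (hΩ : IsOpen Ω)
    (hB : DifferentiableOn ℂ B Ω) (hC : DifferentiableOn ℂ Cc Ω)
    (hF : DifferentiableOn ℂ F Ω) (hCne : ∀ z ∈ Ω, Cc z ≠ 0) :
    ∀ i j, DifferentiableOn ℂ (uC B Cc F i j) Ω := by
  intro i
  induction i using Nat.strong_induction_on with
  | _ i IH =>
    intro j
    match i, j with
    | 0, 0 => simp only [uC]; exact hF.div hC hCne
    | (i+1), 0 =>
      simp only [uC]
      exact ((hB.div hC hCne).neg).mul (derivDiffOn hΩ (IH i (Nat.lt_succ_self i) 0))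
    | 0, (j+1) => simpa only [uC] using differentiableOn_const 0
    | 1, (j+1) => simpa only [uC] using differentiableOn_const 0
    | (i+2), (j+1) =>
      simp only [uC]
      have h1 : DifferentiableOn ℂ (deriv (deriv (uC B Cc F i j))) Ω :=
        derivDiffOn hΩ (derivDiffOn hΩ (IH i (by omega) j))
      have h2 : DifferentiableOn ℂ (deriv (uC B Cc F (i+1) (j+1))) Ω :=
        derivDiffOn hΩ (IH (i+1) (by omega) (j+1))
      exact ((differentiableOn_const 1).div hC hCne).mul (h1.sub (hB.mul h2))

lemma lemD {h : ℂ → ℂ} {g : ℝ → ℝ} {Ω : Set ℂ} (hΩ : IsOpen Ω) {y : ℝ} (hy : (y:ℂ) ∈ Ω)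
    (hd : DifferentiableOn ℂ h Ω)
    (hagree : ∀ w : ℝ, (w:ℂ) ∈ Ω → h ↑w = ↑(g w)) :
    deriv h ↑y = ↑(deriv g y) := by
  set D := deriv h ↑y with hD
  have hDa : HasDerivAt h D ↑y :=
    (hd.differentiableAt (hΩ.mem_nhds hy)).hasDerivAt
  have hcomp : HasDerivAt (fun t : ℝ => h ↑t) D y := hDa.comp_ofReal
  have hJopen : IsOpen {w : ℝ | (w:ℂ) ∈ Ω} := hΩ.preimage Complex.continuous_ofReal
  have heq : (fun t : ℝ => h ↑t) =ᶠ[nhds y] (fun t => ((g t : ℝ):ℂ)) := by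
    apply Filter.eventuallyEq_of_mem (hJopen.mem_nhds hy)
    intro w hw
    exact hagree w hw
  have h2 : HasDerivAt (fun t : ℝ => ((g t : ℝ):ℂ)) D y := hcomp.congr_of_eventuallyEq heq.symm
  have hre : HasDerivAt g D.re y := by
    have := (Complex.reCLM.hasFDerivAt.comp_hasDerivAt y h2)
    simpa [Function.comp_def] using this
  have him : D.im = 0 := by
    have h3 : HasDerivAt (fun t : ℝ => ((g t:ℝ):ℂ).im) D.im y :=
      (Complex.imCLM.hasFDerivAt.comp_hasDerivAt y h2)
    have h4 : (fun t : ℝ => ((g t:ℝ):ℂ).im) = fun _ => (0:ℝ) := by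
      funext t; simp
    rw [h4] at h3
    have h5 : HasDerivAt (fun _ : ℝ => (0:ℝ)) 0 y := hasDerivAt_const y 0
    exact h3.unique h5
  have hgd : deriv g y = D.re := hre.deriv
  rw [hgd]
  exact Complex.ext (by simp) (by simp [him])

lemma uC_eq {b c f : ℝ → ℝ} {B Cc F : ℂ → ℂ} {Ω : Set ℂ} (hΩ : IsOpen Ω)
    (hB : DifferentiableOn ℂ B Ω) (hC : DifferentiableOn ℂ Cc Ω)
    (hF : DifferentiableOn ℂ F Ω) (hCne : ∀ z ∈ Ω, Cc z ≠ 0)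
    (hBb : ∀ y : ℝ, (y:ℂ) ∈ Ω → B ↑y = ↑(b y))
    (hCc : ∀ y : ℝ, (y:ℂ) ∈ Ω → Cc ↑y = ↑(c y))
    (hFf : ∀ y : ℝ, (y:ℂ) ∈ Ω → F ↑y = ↑(f y)) :
    ∀ i j, ∀ y : ℝ, (y:ℂ) ∈ Ω → uC B Cc F i j ↑y = ↑(uS b c f i j y) := by
  have hdiff := uC_diff hΩ hB hC hF hCne
  intro i
  induction i using Nat.strong_induction_on with
  | _ i IH =>
    intro j y hy
    match i, j with
    | 0, 0 =>
      simp only [uC, uS, hFf y hy, hCc y hy]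
      push_cast
      ring
    | (i+1), 0 =>
      have hder : deriv (uC B Cc F i 0) ↑y = ↑(deriv (uS b c f i 0) y) :=
        lemD hΩ hy (hdiff i 0) (fun w hw => IH i (Nat.lt_succ_self i) 0 w hw)
      simp only [uC, uS, hBb y hy, hCc y hy, hder]
      push_cast
      ring
    | 0, (j+1) => simp only [uC, uS]; norm_num
    | 1, (j+1) => simp only [uC, uS]; norm_num
    | (i+2), (j+1) =>
      have hd1 : ∀ w : ℝ, (w:ℂ) ∈ Ω → deriv (uC B Cc F i j) ↑w = ↑(deriv (uS b c f i j) w) :=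
        fun w hw => lemD hΩ hw (hdiff i j) (fun v hv => IH i (by omega) j v hv)
      have hd2 : deriv (deriv (uC B Cc F i j)) ↑y = ↑(deriv (deriv (uS b c f i j)) y) :=
        lemD hΩ hy (derivDiffOn hΩ (hdiff i j)) hd1
      have hd3 : deriv (uC B Cc F (i+1) (j+1)) ↑y = ↑(deriv (uS b c f (i+1) (j+1)) y) :=
        lemD hΩ hy (hdiff (i+1) (j+1)) (fun w hw => IH (i+1) (by omega) (j+1) w hw)
      simp only [uC, uS, hBb y hy, hCc y hy, hd2, hd3]
      push_cast
      ring

lemma lemE {h : ℂ → ℂ} {Ω : Set ℂ} (hΩ : IsOpen Ω) (hd : DifferentiableOn ℂ h Ω)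
    {z : ℂ} {R N : ℝ} (hR : 0 < R) (hball : Metric.closedBall z R ⊆ Ω)
    (hN : ∀ w ∈ Metric.closedBall z R, ‖h w‖ ≤ N) :
    ‖deriv h z‖ ≤ N / R := by
  have hsub : Metric.ball z R ⊆ Ω := (Metric.ball_subset_closedBall).trans hball
  have hdc : DiffContOnCl ℂ h (Metric.ball z R) := by
    refine ⟨hd.mono hsub, ?_⟩
    rw [closure_ball z hR.ne']
    exact (hd.continuousOn).mono hball
  apply Complex.norm_deriv_le_of_forall_mem_sphere_norm_le hR hdc
  intro w hw
  exact hN w (Metric.sphere_subset_closedBall hw)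

lemma thick_ball {S : Set ℂ} (hSne : S.Nonempty) {z : ℂ} {a ρ : ℝ}
    (hz : z ∈ Metric.thickening a S) (hρ : 0 < ρ) :
    Metric.closedBall z ρ ⊆ Metric.thickening (a + ρ) S := by
  intro w hw
  rw [Metric.mem_thickening_iff_infDist_lt hSne] at hz ⊢
  calc Metric.infDist w S ≤ Metric.infDist z S + dist w z := Metric.infDist_le_infDist_add_dist
    _ ≤ Metric.infDist z S + ρ := by linarith [Metric.mem_closedBall.1 hw]
    _ < a + ρ := by linarith

lemma abs_sub_le' (X Y : ℂ) : ‖X - Y‖ ≤ ‖X‖ + ‖Y‖ := by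
  simpa using norm_sub_le X Y

set_option maxHeartbeats 1600000 in
lemma uC_bound {B Cc F : ℂ → ℂ} {S : Set ℂ} (hSne : S.Nonempty) {r Λ γ' A M : ℝ}
    (hr : 0 < r) (hγ' : 0 < γ') (hΛ0 : 0 ≤ Λ) (hA0 : 0 ≤ A) (hM1 : 1 ≤ M)
    (hB : DifferentiableOn ℂ B (Metric.thickening (2*r) S))
    (hC : DifferentiableOn ℂ Cc (Metric.thickening (2*r) S))
    (hF : DifferentiableOn ℂ F (Metric.thickening (2*r) S))
    (hCne : ∀ z ∈ Metric.thickening (2*r) S, Cc z ≠ 0)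
    (hΛB : ∀ z ∈ Metric.thickening (2*r) S, ‖B z‖ ≤ Λ)
    (hγC : ∀ z ∈ Metric.thickening (2*r) S, γ' ≤ ‖Cc z‖)
    (hA : ∀ z ∈ Metric.thickening (2*r) S, ‖F z / Cc z‖ ≤ A)
    (hMΛ : Λ ≤ γ' * M) (hMain : 1 + Λ * M ≤ γ' * M^2) :
    ∀ i j s z, 0 < s → s ≤ r → z ∈ Metric.thickening (2*r - s) S →
      ‖uC B Cc F i j z‖ ≤ A * (M * i / s)^i := by
  set Ω := Metric.thickening (2*r) S with hΩdef
  have hΩopen : IsOpen Ω := Metric.isOpen_thickening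
  have hdiff := uC_diff hΩopen hB hC hF hCne
  have hsub : ∀ σ : ℝ, 0 ≤ σ → Metric.thickening (2*r - σ) S ⊆ Ω :=
    fun σ hσ => Metric.thickening_mono (by linarith) S
  have base0 : ∀ j, ∀ z ∈ Ω, ‖uC B Cc F 0 j z‖ ≤ A := by
    intro j z hz
    match j with
    | 0 => simpa only [uC] using hA z hz
    | (j+1) => simp only [uC]; simpa using hA0
  intro i
  induction i using Nat.strong_induction_on with
  | _ i IH =>
    intro j s z hs0 hsr hz
    have hzΩ : z ∈ Ω := hsub s (by linarith) hz
    match i, j with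
    | 0, j =>
      simpa using base0 j z hzΩ
    | 1, (j+1) =>
      simp only [uC, norm_zero]
      positivity
    | (i+1), 0 =>
      have hi0 : (0:ℝ) ≤ (i:ℝ) := Nat.cast_nonneg i
      have hn1 : (0:ℝ) < (i:ℝ) + 1 := by positivity
      set d : ℝ := s / ((i:ℝ)+1) with hd
      have hd0 : 0 < d := by positivity
      have hdle : d ≤ s := by
        rw [hd, div_le_iff₀ hn1]; nlinarith
      set s' : ℝ := s - d with hs'
      have hs'0 : 0 ≤ s' := by simp only [hs']; linarith
      set X : ℝ := M * ((i:ℝ)+1) / s with hX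
      have hX0 : 0 < X := by positivity
      have hXne : X ≠ 0 := ne_of_gt hX0
      have hMne : M ≠ 0 := by positivity
      have hγne : γ' ≠ 0 := ne_of_gt hγ'
      have hsne : s ≠ 0 := ne_of_gt hs0
      have hdm : d = M / X := by
        rw [hd, hX]; field_simp
      have hball : Metric.closedBall z d ⊆ Metric.thickening (2*r - s') S := by
        have := thick_ball hSne hz hd0
        rwa [show 2*r - s + d = 2*r - s' by rw [hs']; ring] at this
      have hin : ∀ w ∈ Metric.thickening (2*r - s') S,
          ‖uC B Cc F i 0 w‖ ≤ A * X^i := by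
        rcases Nat.eq_zero_or_pos i with rfl | hipos
        · intro w hw
          have hwΩ : w ∈ Ω := hsub _ hs'0 hw
          simpa using base0 0 w hwΩ
        · intro w hw
          have hii : (1:ℝ) ≤ (i:ℝ) := by exact_mod_cast hipos
          have hdlt : d < s := by
            rw [hd, div_lt_iff₀ hn1]; nlinarith
          have hs'pos : 0 < s' := by simp only [hs']; linarith
          have hXeq : M * (i:ℝ) / s' = X := by
            rw [hX, hs', hd, div_eq_div_iff (by linarith) (by positivity)]
            field_simp
            ring
          have := IH i (by omega) 0 s' w hs'pos (by simp only [hs']; linarith) hw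
          calc ‖uC B Cc F i 0 w‖ ≤ A * (M * (i:ℝ) / s')^i := this
            _ = A * X^i := by rw [hXeq]
      have hder : ‖deriv (uC B Cc F i 0) z‖ ≤ (A * X^i) / d :=
        lemE hΩopen (hdiff i 0) hd0 (hball.trans (hsub _ hs'0))
          (fun w hw => hin w (hball hw))
      simp only [uC, norm_mul, norm_neg, norm_div]
      have h1 : ‖B z‖ / ‖Cc z‖ ≤ Λ / γ' :=
        div_le_div₀ (by linarith) (hΛB z hzΩ) hγ' (hγC z hzΩ)
      calc ‖B z‖ / ‖Cc z‖ * ‖deriv (uC B Cc F i 0) z‖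
          ≤ (Λ / γ') * ((A * X^i) / d) :=
            mul_le_mul h1 hder (by positivity) (by positivity)
        _ = (A * X^(i+1)) * (Λ / (γ' * M)) := by
            rw [hdm, pow_succ, div_div_eq_mul_div]; ring
        _ ≤ (A * X^(i+1)) * 1 := by
            apply mul_le_mul_of_nonneg_left _ (by positivity)
            rw [div_le_one (by positivity)]
            exact hMΛ
        _ = A * (M * ((i:ℝ)+1) / s)^(i+1) := by rw [mul_one, hX]
        _ = A * (M * ((i+1:ℕ):ℝ) / s)^(i+1) := by norm_num
    | (i+2), (j+1) =>
      have hi0 : (0:ℝ) ≤ (i:ℝ) := Nat.cast_nonneg i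
      have hn2 : (0:ℝ) < (i:ℝ) + 2 := by positivity
      set d : ℝ := s / ((i:ℝ)+2) with hd
      have hd0 : 0 < d := by positivity
      have h2d : 2*d ≤ s := by
        rw [hd, mul_div_assoc', div_le_iff₀ hn2]; nlinarith
      have hdlt : d < s := by
        rw [hd, div_lt_iff₀ hn2]; nlinarith
      set s' : ℝ := s - d with hs'
      have hs'0 : 0 < s' := by simp only [hs']; linarith
      have hs'r : s' ≤ r := by simp only [hs']; linarith
      set X : ℝ := M * ((i:ℝ)+2) / s with hX
      have hX0 : 0 < X := by positivity
      have hXne : X ≠ 0 := ne_of_gt hX0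
      have hMne : M ≠ 0 := by positivity
      have hγne : γ' ≠ 0 := ne_of_gt hγ'
      have hsne : s ≠ 0 := ne_of_gt hs0
      have hdm : d = M / X := by
        rw [hd, hX]; field_simp
      -- bound for deriv (uC (i+1) (j+1)) at z
      have hXeq1 : M * ((i:ℝ)+1) / s' = X := by
        rw [hX, hs', hd, div_eq_div_iff (by linarith) (by positivity)]
        field_simp
        ring
      have hIH1 : ∀ w ∈ Metric.thickening (2*r - s') S,
          ‖uC B Cc F (i+1) (j+1) w‖ ≤ A * X^(i+1) := by
        intro w hw
        have := IH (i+1) (by omega) (j+1) s' w hs'0 hs'r hw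
        calc ‖uC B Cc F (i+1) (j+1) w‖
            ≤ A * (M * ((i+1:ℕ):ℝ) / s')^(i+1) := this
          _ = A * X^(i+1) := by rw [← hXeq1]; norm_num
      have hball1 : Metric.closedBall z d ⊆ Metric.thickening (2*r - s') S := by
        have := thick_ball hSne hz hd0
        rwa [show 2*r - s + d = 2*r - s' by rw [hs']; ring] at this
      have hder1 : ‖deriv (uC B Cc F (i+1) (j+1)) z‖ ≤ (A * X^(i+1)) / d :=
        lemE hΩopen (hdiff (i+1) (j+1)) hd0 (hball1.trans (hsub _ hs'0.le))
          (fun w hw => hIH1 w (hball1 hw))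
      -- bound for uC i j on thickening (2r - (s' - d))
      have hs''0 : 0 ≤ s' - d := by simp only [hs']; linarith
      have hin : ∀ w ∈ Metric.thickening (2*r - (s' - d)) S,
          ‖uC B Cc F i j w‖ ≤ A * X^i := by
        rcases Nat.eq_zero_or_pos i with rfl | hipos
        · intro w hw
          have hwΩ : w ∈ Ω := hsub _ hs''0 hw
          simpa using base0 j w hwΩ
        · intro w hw
          have hii : (1:ℝ) ≤ (i:ℝ) := by exact_mod_cast hipos
          have h2dlt : 2*d < s := by
            rw [hd, mul_div_assoc', div_lt_iff₀ hn2]; nlinarith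
          have hs''pos : 0 < s' - d := by simp only [hs']; linarith
          have hXeq : M * (i:ℝ) / (s' - d) = X := by
            rw [hX, hs', hd, div_eq_div_iff (by linarith) (by positivity)]
            field_simp
            ring
          have := IH i (by omega) j (s' - d) w hs''pos (by simp only [hs']; linarith) hw
          calc ‖uC B Cc F i j w‖ ≤ A * (M * (i:ℝ) / (s' - d))^i := this
            _ = A * X^i := by rw [hXeq]
      have hder2a : ∀ w ∈ Metric.thickening (2*r - s') S,
          ‖deriv (uC B Cc F i j) w‖ ≤ (A * X^i) / d := by
        intro w hw
        have hball2 : Metric.closedBall w d ⊆ Metric.thickening (2*r - (s' - d)) S := by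
          have := thick_ball hSne hw hd0
          rwa [show 2*r - s' + d = 2*r - (s' - d) by ring] at this
        exact lemE hΩopen (hdiff i j) hd0 (hball2.trans (hsub _ hs''0))
          (fun v hv => hin v (hball2 hv))
      have hder2 : ‖deriv (deriv (uC B Cc F i j)) z‖ ≤ ((A * X^i) / d) / d :=
        lemE hΩopen (derivDiffOn hΩopen (hdiff i j)) hd0 (hball1.trans (hsub _ hs'0.le))
          (fun w hw => hder2a w (hball1 hw))
      -- assemble
      simp only [uC, norm_mul, norm_div, norm_one]
      have hCz : γ' ≤ ‖Cc z‖ := hγC z hzΩ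
      have htri : ‖deriv (deriv (uC B Cc F i j)) z
            - B z * deriv (uC B Cc F (i+1) (j+1)) z‖
          ≤ ((A * X^i) / d) / d + Λ * ((A * X^(i+1)) / d) := by
        refine (abs_sub_le' _ _).trans (add_le_add hder2 ?_)
        rw [norm_mul]
        exact mul_le_mul (hΛB z hzΩ) hder1 (by positivity) hΛ0
      have h1d : (A * X^i) / d / d = A * X^(i+2) / M^2 := by
        rw [hdm, show (i+2) = i + 1 + 1 by ring, pow_succ, pow_succ,
          div_div_eq_mul_div, div_div_eq_mul_div]
        ring
      have h2d' : Λ * ((A * X^(i+1)) / d) = Λ * A * X^(i+2) / M := by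
        rw [hdm, show (i+2) = i + 1 + 1 by ring, pow_succ, div_div_eq_mul_div]
        ring
      have hfin : 1 / ‖Cc z‖ * (((A * X^i) / d) / d + Λ * ((A * X^(i+1)) / d))
          ≤ A * X^(i+2) := by
        rw [h1d, h2d']
        have hbound : 1 / ‖Cc z‖ ≤ 1 / γ' :=
          one_div_le_one_div_of_le hγ' hCz
        calc 1 / ‖Cc z‖ * (A * X^(i+2) / M^2 + Λ * A * X^(i+2) / M)
            ≤ 1 / γ' * (A * X^(i+2) / M^2 + Λ * A * X^(i+2) / M) := by
              apply mul_le_mul_of_nonneg_right hbound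
              positivity
          _ = (A * X^(i+2)) * ((1 + Λ * M) / (γ' * M^2)) := by
              field_simp
          _ ≤ (A * X^(i+2)) * 1 := by
              apply mul_le_mul_of_nonneg_left _ (by positivity)
              rw [div_le_one (by positivity)]
              exact hMain
          _ = A * X^(i+2) := by ring
      calc 1 / ‖Cc z‖ * ‖deriv (deriv (uC B Cc F i j)) z
            - B z * deriv (uC B Cc F (i+1) (j+1)) z‖
          ≤ 1 / ‖Cc z‖ * (((A * X^i) / d) / d + Λ * ((A * X^(i+1)) / d)) :=
            mul_le_mul_of_nonneg_left htri (by positivity)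
        _ ≤ A * X^(i+2) := hfin
        _ = A * (M * ((i:ℝ)+2) / s)^(i+2) := by rw [hX]
        _ = A * (M * ((i+2:ℕ):ℝ) / s)^(i+2) := by norm_num

set_option maxHeartbeats 1000000 in
theorem stmt_5
    (b c f : ℝ → ℝ) (C_b C_c C_f γ_b γ_c γ_f β γ : ℝ)
    (hCb : 0 < C_b) (hCc : 0 < C_c) (hCf : 0 < C_f)
    (hgb : 0 < γ_b) (hgc : 0 < γ_c) (hgf : 0 < γ_f)
    (hβ : 0 < β) (hγ : 0 < γ)
    (hban : AnalyticOnNhd ℝ b (Set.Icc 0 1))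
    (hcan : AnalyticOnNhd ℝ c (Set.Icc 0 1))
    (hfan : AnalyticOnNhd ℝ f (Set.Icc 0 1))
    (hbb : ∀ n : ℕ, ∀ x ∈ Set.Icc (0:ℝ) 1, |iteratedDeriv n b x| ≤ C_b * n.factorial * γ_b ^ n)
    (hcb : ∀ n : ℕ, ∀ x ∈ Set.Icc (0:ℝ) 1, |iteratedDeriv n c x| ≤ C_c * n.factorial * γ_c ^ n)
    (hfb : ∀ n : ℕ, ∀ x ∈ Set.Icc (0:ℝ) 1, |iteratedDeriv n f x| ≤ C_f * n.factorial * γ_f ^ n)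
    (hblow : ∀ x ∈ Set.Icc (0:ℝ) 1, β ≤ b x)
    (hclow : ∀ x ∈ Set.Icc (0:ℝ) 1, γ ≤ c x)
 :
    ∃ C K : ℝ, 0 < C ∧ 0 < K ∧
    ∃ G : Set ℂ, IsOpen G ∧ (Complex.ofReal '' Set.Icc (0:ℝ) 1) ⊆ G ∧
    ∃ B Cc F : ℂ → ℂ,
      DifferentiableOn ℂ B G ∧ DifferentiableOn ℂ Cc G ∧ DifferentiableOn ℂ F G ∧
      (∀ x ∈ Set.Icc (0:ℝ) 1, B x = b x ∧ Cc x = c x ∧ F x = f x) ∧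
      (∀ z ∈ G, Cc z ≠ 0) ∧
    ∃ U : ℕ → ℕ → ℂ → ℂ,
      (∀ i j : ℕ, DifferentiableOn ℂ (U i j) G) ∧
      (∀ i j : ℕ, ∀ x ∈ Set.Icc (0:ℝ) 1, U i j x = uS b c f i j x) ∧
      (∀ δ : ℝ, 0 < δ → ∀ i j : ℕ, ∀ z ∈ G, δ < Metric.infDist z Gᶜ →
        ‖U i j z‖ ≤ C * δ⁻¹ ^ i * K ^ i * (i:ℝ) ^ i) := by
  classical
  set S : Set ℂ := Complex.ofReal '' Set.Icc 0 1 with hSdef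
  have hSne : S.Nonempty := ⟨((0:ℝ):ℂ), ⟨0, by norm_num, rfl⟩⟩
  have hSc : IsCompact S := isCompact_Icc.image Complex.continuous_ofReal
  obtain ⟨εb, hεb, B, hBa, hBe⟩ := lemB b hban
  obtain ⟨εc, hεc, Cc, hCa, hCe⟩ := lemB c hcan
  obtain ⟨εf, hεf, F, hFa, hFe⟩ := lemB f hfan
  set ε₀ : ℝ := min εb (min εc εf) with hε₀def
  have hε₀ : 0 < ε₀ := by
    simp only [hε₀def, lt_min_iff]
    exact ⟨hεb, hεc, hεf⟩
  have hε₀b : ε₀ ≤ εb := min_le_left _ _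
  have hε₀c : ε₀ ≤ εc := (min_le_right _ _).trans (min_le_left _ _)
  have hε₀f : ε₀ ≤ εf := (min_le_right _ _).trans (min_le_right _ _)
  have hCa0 : AnalyticOnNhd ℂ Cc (Metric.thickening ε₀ S) :=
    fun z hz => hCa z (Metric.thickening_mono hε₀c S hz)
  -- the region where |Cc| > γ/2
  set V : Set ℂ := Metric.thickening ε₀ S ∩ (fun z => ‖Cc z‖) ⁻¹' Set.Ioi (γ/2)
    with hVdef
  have hVopen : IsOpen V := by
    apply ContinuousOn.isOpen_inter_preimage
      (continuous_norm.comp_continuousOn hCa0.continuousOn)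
      Metric.isOpen_thickening isOpen_Ioi
  have hSV : S ⊆ V := by
    rintro z ⟨w, hw, rfl⟩
    refine ⟨Metric.self_subset_thickening hε₀ S ⟨w, hw, rfl⟩, ?_⟩
    have h1 : Cc ((w:ℝ):ℂ) = ((c w : ℝ):ℂ) :=
      hCe w (Metric.self_subset_thickening (by linarith : 0 < εc) S ⟨w, hw, rfl⟩)
    simp only [Set.mem_preimage, h1, Complex.norm_real, Real.norm_eq_abs, Set.mem_Ioi]
    have := hclow w hw
    rw [abs_of_pos (by linarith)]
    linarith
  obtain ⟨r₁, hr₁, hthick⟩ := hSc.exists_thickening_subset_open hVopen hSV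
  set r : ℝ := min r₁ ε₀ / 4 with hrdef
  have hr : 0 < r := by
    simp only [hrdef]
    have : 0 < min r₁ ε₀ := lt_min hr₁ hε₀
    linarith
  have hrr₁ : 2*r ≤ r₁ := by
    have h1 : min r₁ ε₀ ≤ r₁ := min_le_left _ _
    simp only [hrdef]; linarith
  have hrε₀ : 2*r ≤ ε₀ := by
    have h1 : min r₁ ε₀ ≤ ε₀ := min_le_right _ _
    simp only [hrdef]; linarith
  set Ω : Set ℂ := Metric.thickening (2*r) S with hΩdef
  have hΩopen : IsOpen Ω := Metric.isOpen_thickening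
  have hΩV : Ω ⊆ V := (Metric.thickening_mono hrr₁ S).trans hthick
  have hΩb : Ω ⊆ Metric.thickening εb S := Metric.thickening_mono (by linarith) S
  have hΩc : Ω ⊆ Metric.thickening εc S := Metric.thickening_mono (by linarith) S
  have hΩf : Ω ⊆ Metric.thickening εf S := Metric.thickening_mono (by linarith) S
  have hBd : DifferentiableOn ℂ B Ω := fun z hz => ((hBa z (hΩb hz)).differentiableAt).differentiableWithinAt
  have hCd : DifferentiableOn ℂ Cc Ω := fun z hz => ((hCa z (hΩc hz)).differentiableAt).differentiableWithinAt
  have hFd : DifferentiableOn ℂ F Ω := fun z hz => ((hFa z (hΩf hz)).differentiableAt).differentiableWithinAt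
  have hγC : ∀ z ∈ Ω, γ/2 ≤ ‖Cc z‖ := fun z hz => le_of_lt (hΩV hz).2
  have hCne : ∀ z ∈ Ω, Cc z ≠ 0 := by
    intro z hz hcon
    have := hγC z hz
    rw [hcon, norm_zero] at this
    linarith
  -- sup bounds on the compact cthickening
  set K2 : Set ℂ := Metric.cthickening (2*r) S with hK2def
  have hK2c : IsCompact K2 := hSc.cthickening
  have hrε₀' : 2*r < ε₀ := by
    have h1 : min r₁ ε₀ ≤ ε₀ := min_le_right _ _
    have h2 : 0 < min r₁ ε₀ := lt_min hr₁ hε₀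
    simp only [hrdef]; linarith
  have hrr₁' : 2*r < r₁ := by
    have h1 : min r₁ ε₀ ≤ r₁ := min_le_left _ _
    have h2 : 0 < min r₁ ε₀ := lt_min hr₁ hε₀
    simp only [hrdef]; linarith
  have hK2ε₀ : K2 ⊆ Metric.thickening ε₀ S := by
    apply Metric.cthickening_subset_thickening' hε₀ hrε₀'
  have hK2b : K2 ⊆ Metric.thickening εb S :=
    hK2ε₀.trans (Metric.thickening_mono hε₀b S)
  have hK2c' : K2 ⊆ Metric.thickening εc S :=
    hK2ε₀.trans (Metric.thickening_mono hε₀c S)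
  have hK2f : K2 ⊆ Metric.thickening εf S :=
    hK2ε₀.trans (Metric.thickening_mono hε₀f S)
  have hK2V : K2 ⊆ V := by
    refine (Metric.cthickening_subset_thickening' hr₁ hrr₁' S).trans hthick
  have hK2ne : ∀ z ∈ K2, Cc z ≠ 0 := by
    intro z hz hcon
    have := (hK2V hz).2
    rw [Set.mem_preimage, hcon, norm_zero] at this
    simp only [Set.mem_Ioi] at this
    linarith
  have hBaK : AnalyticOnNhd ℂ B K2 := fun z hz => hBa z (hK2b hz)
  have hFaK : AnalyticOnNhd ℂ F K2 := fun z hz => hFa z (hK2f hz)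
  have hCaK : AnalyticOnNhd ℂ Cc K2 := fun z hz => hCa z (hK2c' hz)
  obtain ⟨Λ₁, hΛ₁⟩ := hK2c.exists_bound_of_continuousOn hBaK.continuousOn
  obtain ⟨A₁, hA₁⟩ := hK2c.exists_bound_of_continuousOn
    (ContinuousOn.div hFaK.continuousOn hCaK.continuousOn hK2ne)
  set Λ : ℝ := max Λ₁ 0 with hΛdef
  have hΛ0 : 0 ≤ Λ := le_max_right _ _
  set A : ℝ := max A₁ 0 + 1 with hAdef
  have hA0 : 0 < A := by
    have : (0:ℝ) ≤ max A₁ 0 := le_max_right _ _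
    linarith
  set γ' : ℝ := γ/2 with hγ'def
  have hγ'0 : 0 < γ' := by simp only [hγ'def]; linarith
  set M : ℝ := max 1 ((1+Λ)/γ') with hMdef
  have hM1 : 1 ≤ M := le_max_left _ _
  have hM0 : 0 < M := by linarith
  have h1ΛM : 1 + Λ ≤ γ' * M := by
    have h1 : (1+Λ)/γ' ≤ M := le_max_right _ _
    calc 1 + Λ = γ' * ((1+Λ)/γ') := by field_simp
      _ ≤ γ' * M := mul_le_mul_of_nonneg_left h1 (le_of_lt hγ'0)
  have hMΛ : Λ ≤ γ' * M := by linarith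
  have hMain : 1 + Λ * M ≤ γ' * M^2 := by nlinarith
  have hsubΩ : Ω ⊆ K2 := Metric.thickening_subset_cthickening _ _
  have hΛB : ∀ z ∈ Ω, ‖B z‖ ≤ Λ := by
    intro z hz
    calc ‖B z‖ = ‖B z‖ := rfl
      _ ≤ Λ₁ := hΛ₁ z (hsubΩ hz)
      _ ≤ Λ := le_max_left _ _
  have hAF : ∀ z ∈ Ω, ‖F z / Cc z‖ ≤ A := by
    intro z hz
    calc ‖F z / Cc z‖ = ‖F z / Cc z‖ := rfl
      _ ≤ A₁ := hA₁ z (hsubΩ hz)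
      _ ≤ max A₁ 0 := le_max_left _ _
      _ ≤ A := by simp only [hAdef]; linarith
  -- the main estimate
  have Q := uC_bound hSne hr hγ'0 hΛ0 (le_of_lt hA0) hM1 hBd hCd hFd hCne hΛB hγC hAF hMΛ hMain
  -- the neighborhood G
  set G : Set ℂ := Metric.thickening r S with hGdef
  have hGΩ : G ⊆ Ω := Metric.thickening_mono (by linarith) S
  have hSΩ : S ⊆ Ω := Metric.self_subset_thickening (by linarith) S
  have hrealb : ∀ y : ℝ, (y:ℂ) ∈ Ω → B ↑y = ↑(b y) := fun y hy => hBe y (hΩb hy)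
  have hrealc : ∀ y : ℝ, (y:ℂ) ∈ Ω → Cc ↑y = ↑(c y) := fun y hy => hCe y (hΩc hy)
  have hrealf : ∀ y : ℝ, (y:ℂ) ∈ Ω → F ↑y = ↑(f y) := fun y hy => hFe y (hΩf hy)
  refine ⟨A, 2*M, hA0, by linarith, G, Metric.isOpen_thickening,
    Metric.self_subset_thickening hr S, B, Cc, F,
    hBd.mono hGΩ, hCd.mono hGΩ, hFd.mono hGΩ, ?_, ?_, uC B Cc F, ?_, ?_, ?_⟩
  · intro x hx
    have hxS : ((x:ℝ):ℂ) ∈ S := ⟨x, hx, rfl⟩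
    exact ⟨hrealb x (hSΩ hxS), hrealc x (hSΩ hxS), hrealf x (hSΩ hxS)⟩
  · intro z hz
    exact hCne z (hGΩ hz)
  · intro i j
    exact (uC_diff hΩopen hBd hCd hFd hCne i j).mono hGΩ
  · intro i j x hx
    exact uC_eq hΩopen hBd hCd hFd hCne hrealb hrealc hrealf i j x (hSΩ ⟨x, hx, rfl⟩)
  · intro δ hδ i j z hzG hdist
    -- every point of G has imaginary part < r in absolute value
    have hzb : |z.im| < r := by
      rw [hGdef, Metric.mem_thickening_iff] at hzG
      obtain ⟨s₀, hs₀S, hds⟩ := hzG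
      obtain ⟨w, hwI, rfl⟩ := hs₀S
      calc |z.im| = |(z - ((w:ℝ):ℂ)).im| := by simp
        _ ≤ ‖z - ((w:ℝ):ℂ)‖ := Complex.abs_im_le_norm _
        _ < r := by rwa [Complex.dist_eq] at hds
    -- the point z + 2r·i is outside G
    set w₀ : ℂ := z + ((2*r : ℝ):ℂ) * Complex.I with hw₀def
    have hw₀G : w₀ ∈ Gᶜ := by
      intro hcon
      rw [hGdef, Metric.mem_thickening_iff] at hcon
      obtain ⟨s₀, hs₀S, hds⟩ := hcon
      obtain ⟨w, hwI, rfl⟩ := hs₀S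
      have him : |w₀.im| < r := by
        calc |w₀.im| = |(w₀ - ((w:ℝ):ℂ)).im| := by simp
          _ ≤ ‖w₀ - ((w:ℝ):ℂ)‖ := Complex.abs_im_le_norm _
          _ < r := by rwa [Complex.dist_eq] at hds
      have him2 : w₀.im = z.im + 2*r := by
        simp [hw₀def]
      rw [him2] at him
      rw [abs_lt] at him hzb
      linarith [him.2, hzb.1]
    have hd2r : Metric.infDist z Gᶜ ≤ 2*r := by
      have h1 : dist z w₀ = 2*r := by
        rw [hw₀def, dist_eq_norm]
        rw [show z - (z + ((2*r : ℝ):ℂ) * Complex.I) = -(((2*r : ℝ):ℂ) * Complex.I) by ring]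
        rw [norm_neg, norm_mul, Complex.norm_real, Real.norm_eq_abs, Complex.norm_I, mul_one,
          abs_of_pos (by linarith)]
      calc Metric.infDist z Gᶜ ≤ dist z w₀ := Metric.infDist_le_dist_of_mem hw₀G
        _ = 2*r := h1
    have hδ2r : δ < 2*r := lt_of_lt_of_le hdist hd2r
    -- the bound from Q at s = r
    have hzthick : z ∈ Metric.thickening (2*r - r) S := by
      rw [show 2*r - r = r by ring]
      exact hzG
    have hb := Q i j r z hr (le_refl r) hzthick
    -- convert to the required form
    have hMr : M / r ≤ 2*M/δ := by
      rw [div_le_div_iff₀ hr hδ]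
      nlinarith
    calc ‖uC B Cc F i j z‖ ≤ A * (M * i / r)^i := hb
      _ = A * ((M/r)^i * (i:ℝ)^i) := by
          rw [show M * (i:ℝ) / r = (M/r) * (i:ℝ) by ring, mul_pow]
      _ ≤ A * ((2*M/δ)^i * (i:ℝ)^i) := by
          apply mul_le_mul_of_nonneg_left _ (le_of_lt hA0)
          apply mul_le_mul_of_nonneg_right _ (by positivity)
          exact pow_le_pow_left₀ (by positivity) hMr i
      _ = A * δ⁻¹^i * (2*M)^i * (i:ℝ)^i := by
          rw [div_pow, div_eq_mul_inv, ← inv_pow]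
          ring
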